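/- Let H ∈ ℝ^{N×d}, let K = H Hᵀ have eigenvalues λ₁ ≥ … ≥ λ_N, and let P_{r₀} be the orthogonal projection onto the span of the top r₀ eigenvectors of K. Then for every y ∈ ℝ^N in the column space of H, ‖(I − P_{r₀}) y‖₂² ≤ (λ_{r₀+1} / λ_min⁺) ‖y‖₂², where λ_min⁺ is the smallest nonzero eigenvalue of K. In particular, if rank(K) ≤ r₀, every y in the column space of H satisfies P_{r₀} y = y. -/

import Mathlib

open Matrix

private lemma dotProduct_sum' {n : ℕ} (v : Fin n → ℝ) (s : Finset (Fin n))
    (w : Fin n → Fin n → ℝ) : v ⬝ᵥ (∑ i ∈ s, w i) = ∑ i ∈ s, v ⬝ᵥ w i := by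
  simp only [dotProduct, Finset.sum_apply, Finset.mul_sum]
  rw [Finset.sum_comm]

private lemma sum_dotProduct' {n : ℕ} (v : Fin n → ℝ) (s : Finset (Fin n))
    (w : Fin n → Fin n → ℝ) : (∑ i ∈ s, w i) ⬝ᵥ v = ∑ i ∈ s, w i ⬝ᵥ v := by
  simp only [dotProduct, Finset.sum_apply, Finset.sum_mul]
  rw [Finset.sum_comm]

theorem top_eigenspace_projection_bound {N d : ℕ}
    (H : Matrix (Fin N) (Fin d) ℝ) (K : Matrix (Fin N) (Fin N) ℝ)
    (hK : K = H * Hᵀ) (hKne : K ≠ 0)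
    (u : Fin N → (Fin N → ℝ))
    (hortho : ∀ i j, u i ⬝ᵥ u j = if i = j then (1 : ℝ) else 0)
    (ev : Fin N → ℝ) (heig : ∀ i, K.mulVec (u i) = ev i • u i)
    (hmono : Antitone ev) (hnn : ∀ i, 0 ≤ ev i)
    (lamMinPos : ℝ) (hlp : 0 < lamMinPos) (hlmem : ∃ i, ev i = lamMinPos)
    (hlmin : ∀ i, ev i ≠ 0 → lamMinPos ≤ ev i)
    (r₀ : ℕ) (hr₀ : r₀ < N)
    (P : (Fin N → ℝ) → (Fin N → ℝ))
    (hP : ∀ y, P y = ∑ i ∈ Finset.univ.filter (fun i : Fin N => (i : ℕ) < r₀),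
        (u i ⬝ᵥ y) • u i)
    (y : Fin N → ℝ) (hy : ∃ x : Fin d → ℝ, y = H.mulVec x) :
    (y - P y) ⬝ᵥ (y - P y) ≤ (ev ⟨r₀, hr₀⟩ / lamMinPos) * (y ⬝ᵥ y) ∧
    (K.rank ≤ r₀ → P y = y) := by
  classical
  -- linear independence of u
  have hli : LinearIndependent ℝ u := by
    rw [linearIndependent_iff']
    intro t g hg i hi
    have h1 := congrArg (fun v => u i ⬝ᵥ v) hg
    simp only [dotProduct_sum', dotProduct_smul, smul_eq_mul, dotProduct_zero] at h1
    rw [Finset.sum_eq_single i] at h1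
    · rw [hortho i i, if_pos rfl] at h1; simpa using h1
    · intro j hj hne
      rw [hortho i j, if_neg (fun h => hne h.symm)]; ring
    · exact fun h => absurd hi h
  have hNpos : 0 < N := lt_of_le_of_lt (Nat.zero_le _) hr₀
  have : Nonempty (Fin N) := ⟨⟨0, hNpos⟩⟩
  let b : Module.Basis (Fin N) ℝ (Fin N → ℝ) :=
    basisOfLinearIndependentOfCardEqFinrank hli (by simp)
  have hb : ∀ i, b i = u i := fun i =>
    congrFun (coe_basisOfLinearIndependentOfCardEqFinrank hli (by simp)) i
  -- expansion of any vector
  have hrepr : ∀ v : Fin N → ℝ, v = ∑ i, (u i ⬝ᵥ v) • u i := by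
    intro v
    conv_lhs => rw [← b.sum_repr v]
    refine Finset.sum_congr rfl fun j _ => ?_
    rw [hb]
    congr 1
    have h2 : u j ⬝ᵥ v = u j ⬝ᵥ ∑ i, b.repr v i • b i := by rw [b.sum_repr]
    rw [h2, dotProduct_sum']
    rw [Finset.sum_eq_single j]
    · rw [hb, dotProduct_smul, smul_eq_mul, hortho j j, if_pos rfl]; ring
    · intro i _ hne
      rw [hb, dotProduct_smul, smul_eq_mul, hortho j i, if_neg (fun h => hne h.symm)]; ring
    · simp
  -- zero eigenvalue ⇒ coefficient zero
  have hzero : ∀ i, ev i = 0 → u i ⬝ᵥ y = 0 := by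
    intro i h0
    obtain ⟨x, hx⟩ := hy
    have hKu : K.mulVec (u i) = 0 := by rw [heig, h0, zero_smul]
    have hw : u i ᵥ* H = 0 := by
      have h1 : u i ⬝ᵥ K.mulVec (u i) = 0 := by rw [hKu, dotProduct_zero]
      rw [hK, ← mulVec_mulVec, dotProduct_mulVec, mulVec_transpose] at h1
      exact dotProduct_self_eq_zero.mp h1
    rw [hx, dotProduct_mulVec, hw, zero_dotProduct]
  -- orthonormal expansion of dot products of partial sums
  have hsumdot : ∀ t : Finset (Fin N),
      (∑ i ∈ t, (u i ⬝ᵥ y) • u i) ⬝ᵥ (∑ j ∈ t, (u j ⬝ᵥ y) • u j)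
        = ∑ i ∈ t, (u i ⬝ᵥ y) ^ 2 := by
    intro t
    rw [sum_dotProduct']
    refine Finset.sum_congr rfl fun i hi => ?_
    rw [smul_dotProduct, dotProduct_sum', smul_eq_mul]
    rw [Finset.sum_eq_single i]
    · rw [dotProduct_smul, smul_eq_mul, hortho i i, if_pos rfl]; ring
    · intro j _ hne
      rw [dotProduct_smul, smul_eq_mul, hortho i j, if_neg (fun h => hne h.symm)]; ring
    · exact fun h => absurd hi h
  set s : Finset (Fin N) := Finset.univ.filter (fun i : Fin N => (i : ℕ) < r₀) with hs
  have hyP : y - P y = ∑ i ∈ sᶜ, (u i ⬝ᵥ y) • u i := by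
    have h2 : P y + ∑ i ∈ sᶜ, (u i ⬝ᵥ y) • u i = y := by
      rw [hP y, Finset.sum_add_sum_compl]
      exact (hrepr y).symm
    exact (eq_sub_of_add_eq' h2).symm
  have hyy : y ⬝ᵥ y = ∑ i, (u i ⬝ᵥ y) ^ 2 := by
    conv_lhs => rw [hrepr y]
    exact hsumdot Finset.univ
  have hcompl : ∀ i : Fin N, i ∈ sᶜ ↔ r₀ ≤ (i : ℕ) := by
    intro i; simp [hs, Finset.mem_compl, Finset.mem_filter, not_lt]
  constructor
  · rw [hyP, hsumdot, hyy]
    have hratio : 0 ≤ ev ⟨r₀, hr₀⟩ / lamMinPos := div_nonneg (hnn _) hlp.le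
    calc ∑ i ∈ sᶜ, (u i ⬝ᵥ y) ^ 2
        ≤ ∑ i ∈ sᶜ, (ev ⟨r₀, hr₀⟩ / lamMinPos) * (u i ⬝ᵥ y) ^ 2 := by
          refine Finset.sum_le_sum fun i hi => ?_
          by_cases h0 : u i ⬝ᵥ y = 0
          · simp [h0]
          · have hevi : ev i ≠ 0 := fun h => h0 (hzero i h)
            have h1 : lamMinPos ≤ ev i := hlmin i hevi
            have hir : (⟨r₀, hr₀⟩ : Fin N) ≤ i := Fin.le_def.mpr ((hcompl i).mp hi)
            have h2 : ev i ≤ ev ⟨r₀, hr₀⟩ := hmono hir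
            have h3 : 1 ≤ ev ⟨r₀, hr₀⟩ / lamMinPos := (one_le_div hlp).mpr (le_trans h1 h2)
            nlinarith [sq_nonneg (u i ⬝ᵥ y)]
      _ = (ev ⟨r₀, hr₀⟩ / lamMinPos) * ∑ i ∈ sᶜ, (u i ⬝ᵥ y) ^ 2 := by rw [Finset.mul_sum]
      _ ≤ (ev ⟨r₀, hr₀⟩ / lamMinPos) * ∑ i, (u i ⬝ᵥ y) ^ 2 := by
          refine mul_le_mul_of_nonneg_left ?_ hratio
          exact Finset.sum_le_sum_of_subset_of_nonneg (Finset.subset_univ _)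
            (fun i _ _ => sq_nonneg _)
  · intro hrank
    have hev0 : ∀ i : Fin N, r₀ ≤ (i : ℕ) → ev i = 0 := by
      intro i hi
      by_contra hne
      have hpos : ∀ j : Fin N, (j : ℕ) ≤ (i : ℕ) → ev j ≠ 0 := by
        intro j hj h0
        have h4 : ev i ≤ ev j := hmono (Fin.le_def.mpr hj)
        have h5 : ev i ≤ 0 := h0 ▸ h4
        exact hne (le_antisymm h5 (hnn i))
      have hmem : ∀ j : Fin N, (j : ℕ) ≤ (i : ℕ) →
          u j ∈ LinearMap.range K.mulVecLin := by
        intro j hj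
        refine ⟨(ev j)⁻¹ • u j, ?_⟩
        rw [mulVecLin_apply, mulVec_smul, heig, smul_smul,
          inv_mul_cancel₀ (hpos j hj), one_smul]
      have hfin : (r₀ : ℕ) < N := hr₀
      let f : Fin (r₀ + 1) → Fin N := fun k =>
        ⟨(k : ℕ), lt_of_le_of_lt (le_trans (Nat.lt_succ_iff.mp k.isLt) hi) i.isLt⟩
      have hfinj : Function.Injective f := by
        intro a b hab
        have h10 : (f a).val = (f b).val := congrArg Fin.val hab
        exact Fin.ext h10
      have hvli : LinearIndependent ℝ (u ∘ f) := hli.comp f hfinj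
      have hspan : Submodule.span ℝ (Set.range (u ∘ f)) ≤ LinearMap.range K.mulVecLin := by
        rw [Submodule.span_le]
        rintro _ ⟨k, rfl⟩
        exact hmem (f k) (le_trans (Nat.lt_succ_iff.mp k.isLt) hi)
      have h6 : r₀ + 1 ≤ K.rank := by
        have h7 := finrank_span_eq_card hvli
        rw [Fintype.card_fin] at h7
        have h8 := Submodule.finrank_mono hspan
        rw [h7] at h8
        exact h8
      omega
    have hc0 : ∀ i ∈ sᶜ, (u i ⬝ᵥ y) • u i = 0 := by
      intro i hi
      rw [hzero i (hev0 i ((hcompl i).mp hi)), zero_smul]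
    have h9 : y - P y = 0 := by
      rw [hyP]; exact Finset.sum_eq_zero hc0
    exact (sub_eq_zero.mp h9).symm
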